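/- If R ≡ 0, then the generalized Neumann eigenvalue λ(Ω) equals 0 whenever both A and B have positive measure; specifically, the function u equal to n/|A| on A and −n/|B| on B has zero average, nonzero L² norm, and zero nonlocal energy (1/2)Φ(A,A,J)u + Φ(A,B,R)u + (1/2)Φ(B,B,G)u = 0. -/

import Mathlib

open MeasureTheory Classical

theorem stmt_2 {N : ℕ}
    (Ω A B : Set (EuclideanSpace ℝ (Fin N)))
    (hΩb : Bornology.IsBounded Ω)
    (hA : MeasurableSet A) (hB : MeasurableSet B)
    (hUnion : A ∪ B = Ω) (hdisj : A ∩ B = ∅)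
    (hApos : 0 < volume A) (hBpos : 0 < volume B)
    (J G : EuclideanSpace ℝ (Fin N) → EuclideanSpace ℝ (Fin N) → ℝ)
    (n : ℝ) (hn : n ≠ 0)
    (u : EuclideanSpace ℝ (Fin N) → ℝ)
    (hu : u = fun x => if x ∈ A then n / (volume A).toReal
                       else -(n / (volume B).toReal)) :
    (∫ x in Ω, u x) = 0 ∧
    (∫ x in Ω, (u x) ^ 2) ≠ 0 ∧
    (1 / 2) * (∫ x in A, ∫ y in A, J x y * (u y - u x) ^ 2)
      + (∫ x in A, ∫ y in B, (0 : ℝ) * (u y - u x) ^ 2)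
      + (1 / 2) * (∫ x in B, ∫ y in B, G x y * (u y - u x) ^ 2) = 0 := by
  have hΩfin : volume Ω < ⊤ := hΩb.measure_lt_top
  have hAfin : volume A < ⊤ :=
    lt_of_le_of_lt (measure_mono (hUnion ▸ Set.subset_union_left)) hΩfin
  have hBfin : volume B < ⊤ :=
    lt_of_le_of_lt (measure_mono (hUnion ▸ Set.subset_union_right)) hΩfin
  set a := (volume A).toReal with ha
  set b := (volume B).toReal with hb
  have hapos : 0 < a := ENNReal.toReal_pos hApos.ne' hAfin.ne
  have hbpos : 0 < b := ENNReal.toReal_pos hBpos.ne' hBfin.ne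
  have hdisj' : Disjoint A B := Set.disjoint_iff_inter_eq_empty.mpr hdisj
  have hBnA : ∀ x ∈ B, x ∉ A := fun x hxB hxA =>
    Set.eq_empty_iff_forall_notMem.mp hdisj x ⟨hxA, hxB⟩
  have huA : Set.EqOn u (fun _ => n / a) A := fun x hx => by simp [hu, hx]
  have huB : Set.EqOn u (fun _ => -(n / b)) B := fun x hx => by
    simp [hu, hBnA x hx]
  have huA2 : Set.EqOn (fun x => (u x) ^ 2) (fun _ => (n / a) ^ 2) A :=
    fun x hx => by simp [huA hx]
  have huB2 : Set.EqOn (fun x => (u x) ^ 2) (fun _ => (n / b) ^ 2) B :=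
    fun x hx => by simp only [huB hx]; ring
  have intA : IntegrableOn u A volume :=
    ((integrableOn_const_iff).mpr (Or.inr hAfin)).congr_fun huA.symm hA
  have intB : IntegrableOn u B volume :=
    ((integrableOn_const_iff).mpr (Or.inr hBfin)).congr_fun huB.symm hB
  have intA2 : IntegrableOn (fun x => (u x) ^ 2) A volume :=
    ((integrableOn_const_iff).mpr (Or.inr hAfin)).congr_fun huA2.symm hA
  have intB2 : IntegrableOn (fun x => (u x) ^ 2) B volume :=
    ((integrableOn_const_iff).mpr (Or.inr hBfin)).congr_fun huB2.symm hB
  refine ⟨?_, ?_, ?_⟩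
  · rw [← hUnion, setIntegral_union hdisj' hB intA intB,
      setIntegral_congr_fun hA huA, setIntegral_congr_fun hB huB,
      setIntegral_const, setIntegral_const, smul_eq_mul, smul_eq_mul, measureReal_def, measureReal_def, ← ha, ← hb]
    field_simp
    ring
  · rw [← hUnion, setIntegral_union hdisj' hB intA2 intB2,
      setIntegral_congr_fun hA huA2, setIntegral_congr_fun hB huB2,
      setIntegral_const, setIntegral_const]
    have h1 : 0 < a • (n / a) ^ 2 := by positivity
    have h2 : 0 < b • (n / b) ^ 2 := by positivity
    exact (add_pos h1 h2).ne'
  · have e1 : (∫ x in A, ∫ y in A, J x y * (u y - u x) ^ 2) = 0 := by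
      rw [setIntegral_congr_fun hA (g := fun _ => (0 : ℝ))
        (fun x hx => by
          rw [setIntegral_congr_fun hA (g := fun _ => (0 : ℝ))
            (fun y hy => by simp [huA hx, huA hy])]
          simp)]
      simp
    have e3 : (∫ x in B, ∫ y in B, G x y * (u y - u x) ^ 2) = 0 := by
      rw [setIntegral_congr_fun hB (g := fun _ => (0 : ℝ))
        (fun x hx => by
          rw [setIntegral_congr_fun hB (g := fun _ => (0 : ℝ))
            (fun y hy => by simp [huB hx, huB hy])]
          simp)]
      simp
    simp [e1, e3]
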